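/- The system of equations (3/2)(y + z) − y·z = 1, (5/4)(x + z) − x·z = 1, (1/2)(x + y) + x·y = 1 has a unique solution with x, y, z ∈ [0,1], namely x = (√241 − 7)/12, y = (√241 − 7)/16, z = (23 − √241)/36, and these values are irrational. -/

import Mathlib

theorem stmt11 :
    let X : ℝ := (Real.sqrt 241 - 7) / 12
    let Y : ℝ := (Real.sqrt 241 - 7) / 16
    let Z : ℝ := (23 - Real.sqrt 241) / 36
    (X ∈ Set.Icc (0:ℝ) 1 ∧ Y ∈ Set.Icc (0:ℝ) 1 ∧ Z ∈ Set.Icc (0:ℝ) 1 ∧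
      (3/2) * (Y + Z) - Y * Z = 1 ∧
      (5/4) * (X + Z) - X * Z = 1 ∧
      (1/2) * (X + Y) + X * Y = 1) ∧
    (∀ x y z : ℝ, x ∈ Set.Icc (0:ℝ) 1 → y ∈ Set.Icc (0:ℝ) 1 → z ∈ Set.Icc (0:ℝ) 1 →
      (3/2) * (y + z) - y * z = 1 →
      (5/4) * (x + z) - x * z = 1 →
      (1/2) * (x + y) + x * y = 1 →
      x = X ∧ y = Y ∧ z = Z) ∧
    Irrational X ∧ Irrational Y ∧ Irrational Z := by
  intro X Y Z
  have hs0 : (0:ℝ) ≤ Real.sqrt 241 := Real.sqrt_nonneg _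
  have hs2 : Real.sqrt 241 ^ 2 = 241 := Real.sq_sqrt (by norm_num)
  have hlo : (15:ℝ) < Real.sqrt 241 := by nlinarith [hs2, hs0]
  have hhi : Real.sqrt 241 < 16 := by nlinarith [hs2, hs0]
  set s := Real.sqrt 241 with hsdef
  have hprime : Nat.Prime 241 := by norm_num
  have hirr : Irrational s := by simpa using hprime.irrational_sqrt
  refine ⟨⟨?_, ?_, ?_, ?_, ?_, ?_⟩, ?_, ?_, ?_, ?_⟩
  · refine Set.mem_Icc.mpr ⟨?_, ?_⟩
    · show (0:ℝ) ≤ (s - 7)/12; linarith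
    · show (s - 7)/12 ≤ 1; linarith
  · refine Set.mem_Icc.mpr ⟨?_, ?_⟩
    · show (0:ℝ) ≤ (s - 7)/16; linarith
    · show (s - 7)/16 ≤ 1; linarith
  · refine Set.mem_Icc.mpr ⟨?_, ?_⟩
    · show (0:ℝ) ≤ (23 - s)/36; linarith
    · show (23 - s)/36 ≤ 1; linarith
  · show (3/2) * ((s - 7)/16 + (23 - s)/36) - (s - 7)/16 * ((23 - s)/36) = 1
    linear_combination (1/576) * hs2
  · show (5/4) * ((s - 7)/12 + (23 - s)/36) - (s - 7)/12 * ((23 - s)/36) = 1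
    linear_combination (1/432) * hs2
  · show (1/2) * ((s - 7)/12 + (s - 7)/16) + (s - 7)/12 * ((s - 7)/16) = 1
    linear_combination (1/192) * hs2
  · rintro x y z ⟨hx0, hx1⟩ ⟨hy0, hy1⟩ ⟨hz0, hz1⟩ h1 h2 h3
    have hd1 : (1:ℝ) + 2*x > 0 := by linarith
    have hd2 : (5:ℝ) - 4*x > 0 := by linarith
    have hy : y * (1 + 2*x) = 2 - x := by linarith [h3]
    have hz : z * (5 - 4*x) = 4 - 5*x := by linarith [h2]
    have hq : 6*x^2 + 7*x - 8 = 0 := by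
      linear_combination (-1) * (((1+2*x)*(5-4*x)) * h1 +
        (-(3/2)*(5-4*x) + (4-5*x) + (z*(5-4*x)-(4-5*x))) * hy +
        (-(3/2)*(1+2*x) + (2-x)) * hz)
    have h0 : (12*x + 7 - s) * (12*x + 7 + s) = 0 := by
      linear_combination 24*hq - hs2
    have hxX : 12*x + 7 = s := by
      rcases mul_eq_zero.mp h0 with h | h
      · linarith
      · linarith
    have hx : x = X := by show x = (s - 7)/12; linarith
    refine ⟨hx, ?_, ?_⟩
    · have hy0' : (y - (s-7)/16) * (1 + 2*x) = 0 := by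
        have hxv : x = (s - 7)/12 := hx
        rw [hxv] at hy ⊢
        linear_combination hy - (1/96) * hs2
      rcases mul_eq_zero.mp hy0' with h | h
      · show y = (s-7)/16; linarith
      · linarith
    · have hz0' : (z - (23-s)/36) * (5 - 4*x) = 0 := by
        have hxv : x = (s - 7)/12 := hx
        rw [hxv] at hz ⊢
        linear_combination hz - (1/108) * hs2
      rcases mul_eq_zero.mp hz0' with h | h
      · show z = (23-s)/36; linarith
      · linarith
  · show Irrational ((s - 7)/12)
    have h := (hirr.sub_ratCast 7).div_ratCast (q := 12) (by norm_num)
    push_cast at h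
    exact h
  · show Irrational ((s - 7)/16)
    have h := (hirr.sub_ratCast 7).div_ratCast (q := 16) (by norm_num)
    push_cast at h
    exact h
  · show Irrational ((23 - s)/36)
    have h := (hirr.ratCast_sub 23).div_ratCast (q := 36) (by norm_num)
    push_cast at h
    exact h
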